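/- arXiv:0801.3011 — 2 statements merged into one kernel-verified Lean document; each statement's English description precedes it below -/
import Mathlib

section
/- Let F be a finite field of characteristic 2 with the setup of the real case, and suppose ε₁, ε₂ are units of R = F[x][t]/(t² + bt + c) with equal degree valuations |ε₁| = |ε₂| in F((1/x)). Then ε₁ = αε₂ for some α ∈ F*. -/
open Polynomial

/-- The image of a polynomial in F((1/x)): evaluate at x = X⁻¹, where the
variable x corresponds to the Laurent series `single (-1) 1` of degree 1
(so that the degree of a Laurent series is minus its order). -/
noncomputable def polyToLaurentInv (F : Type) [Field F] (p : Polynomial F) :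
    LaurentSeries F :=
  Polynomial.aeval (HahnSeries.single (-1 : ℤ) (1 : F)) p

section Aux
variable {F : Type} [Field F]

lemma algebraMap_single (a : F) :
    algebraMap F (LaurentSeries F) a = HahnSeries.single (0:ℤ) a := by
  rw [show (algebraMap F (LaurentSeries F)) a
      = HahnSeries.ofPowerSeries ℤ F (PowerSeries.C a) from rfl,
    HahnSeries.ofPowerSeries_C, HahnSeries.C_apply]

lemma ptl_coeff (p : Polynomial F) (n : ℕ) :
    (polyToLaurentInv F p).coeff (-(n : ℤ)) = p.coeff n := by
  induction p using Polynomial.induction_on' with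
  | add p q hp hq =>
      simp only [polyToLaurentInv, map_add, HahnSeries.coeff_add, Polynomial.coeff_add] at *
      rw [hp, hq]
  | monomial m a =>
      simp only [polyToLaurentInv, Polynomial.aeval_monomial, HahnSeries.single_pow,
        algebraMap_single, HahnSeries.single_mul_single, Polynomial.coeff_monomial,
        HahnSeries.coeff_single, one_pow, mul_one, zero_add, nsmul_eq_mul, mul_neg, mul_one]
      by_cases h : m = n
      · subst h; simp
      · rw [if_neg, if_neg h]
        intro hh
        exact h (by exact_mod_cast neg_injective hh.symm)

lemma ptl_ne_zero {p : Polynomial F} (hp : p ≠ 0) : polyToLaurentInv F p ≠ 0 := by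
  intro h
  have := ptl_coeff p p.natDegree
  rw [h] at this
  simp only [HahnSeries.coeff_zero] at this
  exact hp (Polynomial.leadingCoeff_eq_zero.mp this.symm)

lemma ptl_eq_zero {p : Polynomial F} (hp : polyToLaurentInv F p = 0) : p = 0 := by
  by_contra h; exact ptl_ne_zero h hp

lemma ptl_order_le {p : Polynomial F} (hp : p ≠ 0) :
    (polyToLaurentInv F p).order ≤ -(p.natDegree : ℤ) := by
  apply HahnSeries.order_le_of_coeff_ne_zero
  rw [ptl_coeff]
  exact Polynomial.leadingCoeff_ne_zero.mpr hp

lemma ptl_C (a : F) : polyToLaurentInv F (C a) = HahnSeries.single (0 : ℤ) a := by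
  simp [polyToLaurentInv, algebraMap_single]

lemma ptl_add (p q : Polynomial F) :
    polyToLaurentInv F (p + q) = polyToLaurentInv F p + polyToLaurentInv F q := by
  simp [polyToLaurentInv]

lemma ptl_sub (p q : Polynomial F) :
    polyToLaurentInv F (p - q) = polyToLaurentInv F p - polyToLaurentInv F q := by
  simp [polyToLaurentInv]

lemma ptl_mul (p q : Polynomial F) :
    polyToLaurentInv F (p * q) = polyToLaurentInv F p * polyToLaurentInv F q := by
  simp [polyToLaurentInv]

lemma ptl_pow (p : Polynomial F) (n : ℕ) :
    polyToLaurentInv F (p ^ n) = polyToLaurentInv F p ^ n := by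
  simp [polyToLaurentInv]

lemma ptl_zero : polyToLaurentInv F (0 : Polynomial F) = 0 := by simp [polyToLaurentInv]

lemma adjoin_repr (f : Polynomial (Polynomial F)) (hm : f.Monic) (hf1 : f ≠ 1)
    (hnat : f.natDegree = 2) (z : AdjoinRoot f) :
    ∃ p q : Polynomial F,
      z = AdjoinRoot.of f p + AdjoinRoot.root f * AdjoinRoot.of f q := by
  obtain ⟨g, rfl⟩ := AdjoinRoot.mk_surjective z
  refine ⟨(g %ₘ f).coeff 0, (g %ₘ f).coeff 1, ?_⟩
  have h1 : AdjoinRoot.mk f g = AdjoinRoot.mk f (g %ₘ f) := by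
    rw [AdjoinRoot.mk_eq_mk]
    exact ⟨g /ₘ f, by rw [Polynomial.modByMonic_eq_sub_mul_div g f]; ring⟩
  have h2 : (g %ₘ f).natDegree ≤ 1 := by
    have := Polynomial.natDegree_modByMonic_lt g hm hf1
    omega
  rw [h1]
  conv_lhs => rw [Polynomial.eq_X_add_C_of_natDegree_le_one h2]
  rw [map_add, map_mul]
  rw [show AdjoinRoot.mk f X = AdjoinRoot.root f from rfl,
    show AdjoinRoot.mk f (C ((g %ₘ f).coeff 1)) = AdjoinRoot.of f ((g %ₘ f).coeff 1) from rfl,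
    show AdjoinRoot.mk f (C ((g %ₘ f).coeff 0)) = AdjoinRoot.of f ((g %ₘ f).coeff 0) from rfl]
  ring

lemma adjoin_indep (f : Polynomial (Polynomial F)) (hm : f.Monic)
    (hdeg : f.degree = 2) (A B : Polynomial F)
    (h : AdjoinRoot.of f A + AdjoinRoot.root f * AdjoinRoot.of f B = 0) :
    A = 0 ∧ B = 0 := by
  have h' : AdjoinRoot.mk f (C A + X * C B) = 0 := by
    rw [map_add, map_mul]
    exact h
  rw [AdjoinRoot.mk_eq_zero] at h'
  have h0 : C A + X * C B = 0 := by
    by_contra hne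
    have hXB : (X * C B : Polynomial (Polynomial F)).degree ≤ 1 := by
      apply le_trans (Polynomial.degree_mul_le _ _)
      rw [Polynomial.degree_X]
      have := Polynomial.degree_C_le (a := B)
      calc (1 : WithBot ℕ) + (C B).degree ≤ 1 + 0 := by
            exact add_le_add_right (le_trans this le_rfl) 1
        _ = 1 := by norm_num
    have hCA : (C A : Polynomial (Polynomial F)).degree ≤ 1 :=
      le_trans Polynomial.degree_C_le (by norm_num)
    have hle : (C A + X * C B).degree ≤ 1 :=
      le_trans (Polynomial.degree_add_le _ _) (max_le hCA hXB)
    have := Polynomial.degree_le_of_dvd h' hne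
    rw [hdeg] at this
    exact absurd (le_trans this hle) (by norm_num)
  constructor
  · have := congrArg (fun p => Polynomial.coeff p 0) h0
    simpa using this
  · have := congrArg (fun p => Polynomial.coeff p 1) h0
    simpa using this

lemma adjoin_mul (b c : Polynomial F) (f : Polynomial (Polynomial F))
    (hf : f = X ^ 2 + C b * X + C c) (u v p q : Polynomial F) :
    (AdjoinRoot.of f u + AdjoinRoot.root f * AdjoinRoot.of f v)
      * (AdjoinRoot.of f p + AdjoinRoot.root f * AdjoinRoot.of f q)
    = AdjoinRoot.of f (u * p - c * (v * q))
      + AdjoinRoot.root f * AdjoinRoot.of f (u * q + v * p - b * (v * q)) := by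
  have hroot : AdjoinRoot.root f ^ 2 + AdjoinRoot.of f b * AdjoinRoot.root f
      + AdjoinRoot.of f c = 0 := by
    have h0 := AdjoinRoot.eval₂_root f
    rw [hf] at h0
    simp only [Polynomial.eval₂_add, Polynomial.eval₂_mul, Polynomial.eval₂_pow,
      Polynomial.eval₂_X, Polynomial.eval₂_C] at h0
    rwa [← hf] at h0
  simp only [map_sub, map_add, map_mul]
  linear_combination (AdjoinRoot.of f v * AdjoinRoot.of f q) * hroot

end Aux

/-- Real case: two units ε₁ = u₁ + Δv₁, ε₂ = u₂ + Δv₂ of R with equal degree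
valuations in F((1/x)) agree up to a constant: ε₁ = α ε₂ with α ∈ F*. -/
theorem units_of_equal_valuation_proportional
    (F : Type) [Field F] [Fintype F] [CharP F 2] (b c : Polynomial F)
    (hb : 1 ≤ b.natDegree) (hc : c ≠ 0) (hdeg : c.natDegree < 2 * b.natDegree)
    (hnoroot : ∀ ρ : RatFunc F,
      ρ ^ 2 + algebraMap (Polynomial F) (RatFunc F) b * ρ
        + algebraMap (Polynomial F) (RatFunc F) c ≠ 0)
    (Δ₀ : LaurentSeries F)
    (hΔ : Δ₀ ^ 2 + polyToLaurentInv F b * Δ₀ + polyToLaurentInv F c = 0)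
    (hΔpos : Δ₀.order < 0) :
    ∀ (f : Polynomial (Polynomial F)), f = X ^ 2 + C b * X + C c →
    ∀ u₁ v₁ u₂ v₂ : Polynomial F,
      IsUnit (AdjoinRoot.of f u₁ + AdjoinRoot.root f * AdjoinRoot.of f v₁) →
      IsUnit (AdjoinRoot.of f u₂ + AdjoinRoot.root f * AdjoinRoot.of f v₂) →
      (polyToLaurentInv F u₁ + Δ₀ * polyToLaurentInv F v₁).order
        = (polyToLaurentInv F u₂ + Δ₀ * polyToLaurentInv F v₂).order →
      ∃ a : F, a ≠ 0 ∧ u₁ = C a * u₂ ∧ v₁ = C a * v₂ := by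
  intro f hf u₁ v₁ u₂ v₂ hu1 hu2 hord
  have hb0 : b ≠ 0 := fun h => by simp [h] at hb
  have h2 : (2 : Polynomial F) = 0 := by
    have h2F : (2 : F) = 0 := by exact_mod_cast (CharP.cast_eq_zero F 2)
    rw [← map_ofNat (Polynomial.C : F →+* Polynomial F) 2, h2F, map_zero]
  -- facts about f
  have hlin : (C b * X + C c : Polynomial (Polynomial F)).degree < 2 := by
    have h1 : (C b * X : Polynomial (Polynomial F)).degree ≤ 1 := by
      apply le_trans (Polynomial.degree_mul_le _ _)
      rw [Polynomial.degree_X]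
      have := Polynomial.degree_C_le (a := b)
      calc (C b : Polynomial (Polynomial F)).degree + 1 ≤ 0 + 1 := by
            exact add_le_add_left this 1
        _ = 1 := by norm_num
    have h2' : (C c : Polynomial (Polynomial F)).degree ≤ 1 :=
      le_trans Polynomial.degree_C_le (by norm_num)
    calc (C b * X + C c : Polynomial (Polynomial F)).degree
        ≤ max (C b * X : Polynomial (Polynomial F)).degree (C c : Polynomial (Polynomial F)).degree :=
          Polynomial.degree_add_le _ _
      _ ≤ 1 := max_le h1 h2'
      _ < 2 := by norm_num
  have hm : f.Monic := by
    rw [hf, add_assoc]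
    exact Polynomial.monic_X_pow_add (by exact_mod_cast hlin)
  have hdegf : f.degree = 2 := by
    rw [hf, add_assoc, Polynomial.degree_add_eq_left_of_degree_lt
      (by rw [Polynomial.degree_X_pow]; exact_mod_cast hlin), Polynomial.degree_X_pow]
    norm_cast
  have hnat : f.natDegree = 2 := Polynomial.natDegree_eq_of_degree_eq_some hdegf
  have hf1 : f ≠ 1 := by
    intro h
    rw [h, Polynomial.natDegree_one] at hnat
    exact absurd hnat (by norm_num)
  -- norms are nonzero constants
  obtain ⟨w₁, hw₁⟩ := hu1.exists_right_inv
  obtain ⟨p₁, q₁, rfl⟩ := adjoin_repr f hm hf1 hnat w₁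
  rw [adjoin_mul b c f hf] at hw₁
  obtain ⟨hA₁, hB₁⟩ := adjoin_indep f hm hdegf (u₁ * p₁ - c * (v₁ * q₁) - 1)
    (u₁ * q₁ + v₁ * p₁ - b * (v₁ * q₁))
    (by rw [map_sub, map_one]; linear_combination hw₁)
  obtain ⟨w₂, hw₂⟩ := hu2.exists_right_inv
  obtain ⟨p₂, q₂, rfl⟩ := adjoin_repr f hm hf1 hnat w₂
  rw [adjoin_mul b c f hf] at hw₂
  obtain ⟨hA₂, hB₂⟩ := adjoin_indep f hm hdegf (u₂ * p₂ - c * (v₂ * q₂) - 1)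
    (u₂ * q₂ + v₂ * p₂ - b * (v₂ * q₂))
    (by rw [map_sub, map_one]; linear_combination hw₂)
  have hN₁ : (u₁ ^ 2 - b * (u₁ * v₁) + c * v₁ ^ 2) * (p₁ ^ 2 - b * (p₁ * q₁) + c * q₁ ^ 2) = 1 := by
    linear_combination (u₁ * p₁ - c * (v₁ * q₁) + 1) * hA₁
      + (c * (u₁ * q₁ + v₁ * p₁ - b * (v₁ * q₁)) - b * (u₁ * p₁ - c * (v₁ * q₁))) * hB₁
  have hN₂ : (u₂ ^ 2 - b * (u₂ * v₂) + c * v₂ ^ 2) * (p₂ ^ 2 - b * (p₂ * q₂) + c * q₂ ^ 2) = 1 := by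
    linear_combination (u₂ * p₂ - c * (v₂ * q₂) + 1) * hA₂
      + (c * (u₂ * q₂ + v₂ * p₂ - b * (v₂ * q₂)) - b * (u₂ * p₂ - c * (v₂ * q₂))) * hB₂
  obtain ⟨α₁, hα₁u, hCα₁⟩ := Polynomial.isUnit_iff.mp (IsUnit.of_mul_eq_one _ hN₁)
  obtain ⟨α₂, hα₂u, hCα₂⟩ := Polynomial.isUnit_iff.mp (IsUnit.of_mul_eq_one _ hN₂)
  have hα₁ : α₁ ≠ 0 := hα₁u.ne_zero
  have hα₂ : α₂ ≠ 0 := hα₂u.ne_zero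
  -- Laurent series elements
  set e₁ : LaurentSeries F := polyToLaurentInv F u₁ + Δ₀ * polyToLaurentInv F v₁ with he₁
  set e₂ : LaurentSeries F := polyToLaurentInv F u₂ + Δ₀ * polyToLaurentInv F v₂ with he₂
  set f₁ : LaurentSeries F := polyToLaurentInv F (u₁ - b * v₁) - Δ₀ * polyToLaurentInv F v₁ with hf₁
  set f₂ : LaurentSeries F := polyToLaurentInv F (u₂ - b * v₂) - Δ₀ * polyToLaurentInv F v₂ with hf₂
  have hconj₁ : e₁ * f₁ = polyToLaurentInv F (C α₁) := by
    rw [hCα₁, he₁, hf₁]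
    simp only [ptl_sub, ptl_add, ptl_mul, ptl_pow]
    linear_combination (-(polyToLaurentInv F v₁) ^ 2) * hΔ
  have hconj₂ : e₂ * f₂ = polyToLaurentInv F (C α₂) := by
    rw [hCα₂, he₂, hf₂]
    simp only [ptl_sub, ptl_add, ptl_mul, ptl_pow]
    linear_combination (-(polyToLaurentInv F v₂) ^ 2) * hΔ
  have hprod₁ : e₁ * f₁ ≠ 0 := by
    rw [hconj₁, ptl_C]; exact HahnSeries.single_ne_zero hα₁
  have hprod₂ : e₂ * f₂ ≠ 0 := by
    rw [hconj₂, ptl_C]; exact HahnSeries.single_ne_zero hα₂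
  have he₁0 : e₁ ≠ 0 := left_ne_zero_of_mul hprod₁
  have hf₁0 : f₁ ≠ 0 := right_ne_zero_of_mul hprod₁
  have he₂0 : e₂ ≠ 0 := left_ne_zero_of_mul hprod₂
  have hf₂0 : f₂ ≠ 0 := right_ne_zero_of_mul hprod₂
  have hordsum₁ : e₁.order + f₁.order = 0 := by
    have h := congrArg HahnSeries.order hconj₁
    rwa [HahnSeries.order_mul he₁0 hf₁0, ptl_C, HahnSeries.order_single hα₁] at h
  have hordsum₂ : e₂.order + f₂.order = 0 := by
    have h := congrArg HahnSeries.order hconj₂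
    rwa [HahnSeries.order_mul he₂0 hf₂0, ptl_C, HahnSeries.order_single hα₂] at h
  -- the cross products
  have hη : e₁ * f₂ = polyToLaurentInv F (u₁ * u₂ - b * (u₁ * v₂) + c * (v₁ * v₂))
      + Δ₀ * polyToLaurentInv F (u₂ * v₁ - u₁ * v₂) := by
    rw [he₁, hf₂]
    simp only [ptl_sub, ptl_add, ptl_mul]
    linear_combination (-(polyToLaurentInv F v₁ * polyToLaurentInv F v₂)) * hΔ
  have hηb : f₁ * e₂ = polyToLaurentInv F (u₁ * u₂ - b * (u₂ * v₁) + c * (v₁ * v₂))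
      + Δ₀ * polyToLaurentInv F (u₁ * v₂ - u₂ * v₁) := by
    rw [he₂, hf₁]
    simp only [ptl_sub, ptl_add, ptl_mul]
    linear_combination (-(polyToLaurentInv F v₁ * polyToLaurentInv F v₂)) * hΔ
  have hordη : (e₁ * f₂).order = 0 := by
    rw [HahnSeries.order_mul he₁0 hf₂0]
    have : e₁.order = e₂.order := hord
    omega
  have hordηb : (f₁ * e₂).order = 0 := by
    rw [HahnSeries.order_mul hf₁0 he₂0]
    have : e₁.order = e₂.order := hord
    omega
  -- the cross terms vanish
  have hV : u₂ * v₁ - u₁ * v₂ = 0 := by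
    by_contra hV
    have hbV : b * (u₂ * v₁ - u₁ * v₂) ≠ 0 := mul_ne_zero hb0 hV
    have h2F : (2 : F) = 0 := by exact_mod_cast (CharP.cast_eq_zero F 2)
    have h2L : (2 : LaurentSeries F) = 0 := by
      rw [← map_ofNat (algebraMap F (LaurentSeries F)) 2, h2F, map_zero]
    have hsum : e₁ * f₂ + f₁ * e₂ = polyToLaurentInv F (b * (u₂ * v₁ - u₁ * v₂)) := by
      rw [he₁, he₂, hf₁, hf₂]
      simp only [ptl_sub, ptl_mul, ptl_add]
      linear_combination (-(2 : LaurentSeries F)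
          * (polyToLaurentInv F v₁ * polyToLaurentInv F v₂)) * hΔ
        + (polyToLaurentInv F u₁ * polyToLaurentInv F u₂
            + polyToLaurentInv F c * (polyToLaurentInv F v₁ * polyToLaurentInv F v₂)
            - polyToLaurentInv F b * (polyToLaurentInv F u₂ * polyToLaurentInv F v₁)) * h2L
    have hne : polyToLaurentInv F (b * (u₂ * v₁ - u₁ * v₂)) ≠ 0 := ptl_ne_zero hbV
    have hminle := HahnSeries.min_order_le_order_add
      (x := e₁ * f₂) (y := f₁ * e₂) (by rw [hsum]; exact hne)
    rw [hordη, hordηb, hsum] at hminle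
    have hle := ptl_order_le hbV
    have hdegbV : (b * (u₂ * v₁ - u₁ * v₂)).natDegree = b.natDegree + (u₂ * v₁ - u₁ * v₂).natDegree :=
      Polynomial.natDegree_mul hb0 hV
    simp only [min_self] at hminle
    omega
  -- so e₁ * f₂ is a nonzero constant
  have hU : e₁ * f₂ = polyToLaurentInv F (u₁ * u₂ - b * (u₁ * v₂) + c * (v₁ * v₂)) := by
    rw [hη, hV, ptl_zero, mul_zero, add_zero]
  have hUne : u₁ * u₂ - b * (u₁ * v₂) + c * (v₁ * v₂) ≠ 0 := by
    intro h
    rw [h, ptl_zero] at hU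
    exact (mul_ne_zero he₁0 hf₂0) hU
  have hUdeg : (u₁ * u₂ - b * (u₁ * v₂) + c * (v₁ * v₂)).natDegree = 0 := by
    have hle := ptl_order_le hUne
    rw [← hU, hordη] at hle
    omega
  obtain ⟨α, hCα⟩ := Polynomial.natDegree_eq_zero.mp hUdeg
  have hα : α ≠ 0 := by
    intro h
    rw [h, map_zero] at hCα
    exact hUne hCα.symm
  have hUC : e₁ * f₂ = polyToLaurentInv F (C α) := by rw [hU, hCα]
  -- the key identity
  have hkey : e₁ * polyToLaurentInv F (C α₂) = polyToLaurentInv F (C α) * e₂ := by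
    rw [← hconj₂, ← hUC]
    ring
  have hPQ : polyToLaurentInv F (u₁ * C α₂ - u₂ * C α)
      + Δ₀ * polyToLaurentInv F (v₁ * C α₂ - v₂ * C α) = 0 := by
    rw [he₁, he₂] at hkey
    simp only [ptl_sub, ptl_mul]
    linear_combination hkey
  -- injectivity of the embedding of F[x] into F((1/x))
  have hinj : Function.Injective
      ((Polynomial.aeval (HahnSeries.single (-1 : ℤ) (1 : F))).toRingHom :
        Polynomial F →+* LaurentSeries F) := by
    intro a a' haa
    have h0 : polyToLaurentInv F (a - a') = 0 := by
      rw [ptl_sub]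
      have : polyToLaurentInv F a = polyToLaurentInv F a' := haa
      rw [this, sub_self]
    have := ptl_eq_zero h0
    exact sub_eq_zero.mp this
  have hP : v₁ * C α₂ - v₂ * C α = 0 := by
    by_contra hP
    have hφP : polyToLaurentInv F (v₁ * C α₂ - v₂ * C α) ≠ 0 := ptl_ne_zero hP
    set ψ : RatFunc F →+* LaurentSeries F := IsFractionRing.lift hinj with hψ
    have hψa : ∀ r : Polynomial F,
        ψ (algebraMap (Polynomial F) (RatFunc F) r) = polyToLaurentInv F r := fun r =>
      IsFractionRing.lift_algebraMap hinj r
    have hden : algebraMap (Polynomial F) (RatFunc F) (v₁ * C α₂ - v₂ * C α) ≠ 0 := by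
      intro h
      exact hP (IsFractionRing.injective (Polynomial F) (RatFunc F) (by rw [h, map_zero]))
    set ρ : RatFunc F := algebraMap (Polynomial F) (RatFunc F) (u₂ * C α - u₁ * C α₂)
      / algebraMap (Polynomial F) (RatFunc F) (v₁ * C α₂ - v₂ * C α) with hρ
    have hψρ : ψ ρ = Δ₀ := by
      rw [hρ, map_div₀, hψa, hψa]
      rw [div_eq_iff hφP]
      simp only [ptl_sub, ptl_mul] at hPQ ⊢
      linear_combination -hPQ
    apply hnoroot ρ
    apply ψ.injective
    rw [map_add, map_add, map_pow, map_mul, hψρ, hψa, hψa, map_zero]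
    exact hΔ
  have hQ : u₁ * C α₂ - u₂ * C α = 0 := by
    apply ptl_eq_zero
    have := hPQ
    rwa [hP, ptl_zero, mul_zero, add_zero] at this
  rw [sub_eq_zero] at hP hQ
  refine ⟨α * α₂⁻¹, mul_ne_zero hα (inv_ne_zero hα₂), ?_, ?_⟩
  · have hα₂C : (C α₂ : Polynomial F) ≠ 0 := by simpa using hα₂
    apply mul_right_cancel₀ hα₂C
    rw [hQ, mul_comm (C (α * α₂⁻¹)) u₂, mul_assoc, ← Polynomial.C_mul,
      show α * α₂⁻¹ * α₂ = α from by field_simp]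
  · have hα₂C : (C α₂ : Polynomial F) ≠ 0 := by simpa using hα₂
    apply mul_right_cancel₀ hα₂C
    rw [hP, mul_comm (C (α * α₂⁻¹)) v₂, mul_assoc, ← Polynomial.C_mul,
      show α * α₂⁻¹ * α₂ = α from by field_simp]
end

section
/- Let F be a finite field with q elements, b, c, d ∈ F[x] (characteristic 2, real case), let ε₀ generate U(R) with k = deg ε₀ > 0. Then every solution ω = u + Δv ∈ R of N(ω) = d with 0 ≤ deg ω ≤ k−1 satisfies deg v ≤ max(deg d, k − 1) − deg b, where degrees are taken under the embedding R ↪ F((1/x)). (Key identity: ω satisfies ω² + (bv)ω + d = 0.) -/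
open Polynomial

lemma polyToLaurentInv_add (F : Type) [Field F] (p q : Polynomial F) :
    polyToLaurentInv F (p + q) = polyToLaurentInv F p + polyToLaurentInv F q :=
  map_add _ _ _

lemma polyToLaurentInv_mul (F : Type) [Field F] (p q : Polynomial F) :
    polyToLaurentInv F (p * q) = polyToLaurentInv F p * polyToLaurentInv F q :=
  map_mul _ _ _

lemma polyToLaurentInv_pow (F : Type) [Field F] (p : Polynomial F) (n : ℕ) :
    polyToLaurentInv F (p ^ n) = polyToLaurentInv F p ^ n :=
  map_pow _ _ _

lemma polyToLaurentInv_zero (F : Type) [Field F] :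
    polyToLaurentInv F 0 = 0 :=
  map_zero _

lemma coeff_polyToLaurentInv (F : Type) [Field F] (p : Polynomial F) (i : ℕ) :
    (polyToLaurentInv F p).coeff (-(i : ℤ)) = p.coeff i := by
  induction p using Polynomial.induction_on' with
  | add p q hp hq =>
    simp only [polyToLaurentInv, map_add, HahnSeries.coeff_add, Polynomial.coeff_add] at *
    rw [hp, hq]
  | monomial n a =>
    have hpow : (HahnSeries.single (-1 : ℤ) (1 : F)) ^ n
        = HahnSeries.single (-(n : ℤ)) 1 := by
      simpa using HahnSeries.single_pow (-1 : ℤ) n (1 : F)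
    have halg : (algebraMap F (LaurentSeries F)) a = HahnSeries.single (0 : ℤ) a := by
      rw [HahnSeries.algebraMap_apply',
        show (algebraMap F (PowerSeries F)) a = PowerSeries.C (R := F) a from rfl,
        HahnSeries.ofPowerSeries_C, HahnSeries.C_apply]
    simp only [polyToLaurentInv, Polynomial.aeval_monomial, hpow, halg,
      HahnSeries.single_mul_single, zero_add, mul_one, HahnSeries.coeff_single,
      Polynomial.coeff_monomial]
    by_cases h : i = n
    · simp [h]
    · rw [if_neg (by omega), if_neg (by omega)]

lemma polyToLaurentInv_ne_zero (F : Type) [Field F] {p : Polynomial F} (hp : p ≠ 0) :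
    polyToLaurentInv F p ≠ 0 := by
  intro h
  have := coeff_polyToLaurentInv F p p.natDegree
  rw [h] at this
  simp only [HahnSeries.coeff_zero] at this
  exact hp (Polynomial.leadingCoeff_eq_zero.mp this.symm)

lemma order_polyToLaurentInv (F : Type) [Field F] {p : Polynomial F} (hp : p ≠ 0) :
    (polyToLaurentInv F p).order = -(p.natDegree : ℤ) := by
  have hne := polyToLaurentInv_ne_zero F hp
  apply le_antisymm
  · apply HahnSeries.order_le_of_coeff_ne_zero
    rw [coeff_polyToLaurentInv]
    exact fun h => hp (Polynomial.leadingCoeff_eq_zero.mp h)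
  · by_contra h
    push_neg at h
    have hco := fun h => hne (HahnSeries.coeff_order_eq_zero.mp h)
    set m := (polyToLaurentInv F p).order with hm
    have hm0 : m < 0 := lt_of_lt_of_le h (by omega)
    have hmeq : m = -(((-m).toNat : ℕ) : ℤ) := by omega
    rw [hmeq, coeff_polyToLaurentInv] at hco
    exact hco (Polynomial.coeff_eq_zero_of_natDegree_lt (by omega))

/-- Real case: ε₀ = x₀ + Δy₀ generates U(R) and has degree k > 0.  Every
solution ω = u + Δv of N(ω) = u² + buv + cv² = d with 0 ≤ deg ω ≤ k − 1
satisfies deg v ≤ max(deg d, k − 1) − deg b. -/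
theorem degree_bound_for_small_solutions
    (F : Type) [Field F] [Fintype F] [CharP F 2] (b c d : Polynomial F)
    (hb : 1 ≤ b.natDegree) (hc : c ≠ 0) (hdeg : c.natDegree < 2 * b.natDegree)
    (hnoroot : ∀ ρ : RatFunc F,
      ρ ^ 2 + algebraMap (Polynomial F) (RatFunc F) b * ρ
        + algebraMap (Polynomial F) (RatFunc F) c ≠ 0)
    (Δ₀ : LaurentSeries F)
    (hΔ : Δ₀ ^ 2 + polyToLaurentInv F b * Δ₀ + polyToLaurentInv F c = 0)
    (hΔpos : Δ₀.order < 0)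
    (x₀ y₀ : Polynomial F) (k : ℕ) (hk : 0 < k)
    (hnorm : x₀ ^ 2 + b * x₀ * y₀ + c * y₀ ^ 2 = 1)
    -- ε₀ has degree k
    (hdegk : (polyToLaurentInv F x₀ + Δ₀ * polyToLaurentInv F y₀).order = -(k : ℤ))
    -- ε₀ generates U(R)
    (hgen : ∀ x y : Polynomial F, x ^ 2 + b * x * y + c * y ^ 2 = 1 →
      ∃ n : ℤ,
        polyToLaurentInv F x + Δ₀ * polyToLaurentInv F y
          = (polyToLaurentInv F x₀ + Δ₀ * polyToLaurentInv F y₀) ^ n) :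
    ∀ u v : Polynomial F, u ^ 2 + b * u * v + c * v ^ 2 = d →
      -- 0 ≤ deg ω ≤ k − 1, i.e. −(k−1) ≤ order ω ≤ 0
      -((k : ℤ) - 1) ≤ (polyToLaurentInv F u + Δ₀ * polyToLaurentInv F v).order →
      (polyToLaurentInv F u + Δ₀ * polyToLaurentInv F v).order ≤ 0 →
      v.degree + b.degree ≤ max d.degree ((k - 1 : ℕ) : WithBot ℕ) := by
  intro u v heq hlow hupp
  by_cases hv : v = 0
  · subst hv
    simp
  have hbne : b ≠ 0 := fun h => by simp [h] at hb
  have hPb : polyToLaurentInv F b ≠ 0 := polyToLaurentInv_ne_zero F hbne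
  have hPv : polyToLaurentInv F v ≠ 0 := polyToLaurentInv_ne_zero F hv
  have htwoF : (2 : F) = 0 := by
    have := CharP.cast_eq_zero F 2
    simpa using this
  have htwo : (2 : LaurentSeries F) = 0 := by
    rw [← map_ofNat (algebraMap F (LaurentSeries F)) 2, htwoF, map_zero]
  have hd' : polyToLaurentInv F u ^ 2
      + polyToLaurentInv F b * polyToLaurentInv F u * polyToLaurentInv F v
      + polyToLaurentInv F c * polyToLaurentInv F v ^ 2 = polyToLaurentInv F d := by
    have := congrArg (polyToLaurentInv F) heq
    simpa only [polyToLaurentInv_add, polyToLaurentInv_mul, polyToLaurentInv_pow] using this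
  set ω := polyToLaurentInv F u + Δ₀ * polyToLaurentInv F v with hω
  have hkey : polyToLaurentInv F b * polyToLaurentInv F v * ω
      = ω * ω + polyToLaurentInv F d := by
    rw [hω]
    linear_combination hd' - (polyToLaurentInv F v * polyToLaurentInv F v) * hΔ
      + (polyToLaurentInv F b * Δ₀ * polyToLaurentInv F v * polyToLaurentInv F v
        - polyToLaurentInv F u * polyToLaurentInv F u
        - polyToLaurentInv F u * Δ₀ * polyToLaurentInv F v) * htwo
  have hωne : ω ≠ 0 := by
    intro h0
    have hPd0 : polyToLaurentInv F d = 0 := by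
      have h1 := hkey
      rw [h0, mul_zero, mul_zero, zero_add] at h1
      exact h1.symm
    have hd0 : d = 0 := by
      by_contra hdne
      exact polyToLaurentInv_ne_zero F hdne hPd0
    have hpoly : u ^ 2 + b * u * v + c * v ^ 2 = 0 := by rw [heq, hd0]
    apply hnoroot (algebraMap (Polynomial F) (RatFunc F) u
      / algebraMap (Polynomial F) (RatFunc F) v)
    have hAv : algebraMap (Polynomial F) (RatFunc F) v ≠ 0 :=
      RatFunc.algebraMap_ne_zero hv
    have hA : (algebraMap (Polynomial F) (RatFunc F)) u ^ 2
        + (algebraMap (Polynomial F) (RatFunc F)) b * (algebraMap (Polynomial F) (RatFunc F)) u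
          * (algebraMap (Polynomial F) (RatFunc F)) v
        + (algebraMap (Polynomial F) (RatFunc F)) c * (algebraMap (Polynomial F) (RatFunc F)) v ^ 2
        = 0 := by
      simpa only [map_add, map_mul, map_pow, map_zero]
        using congrArg (algebraMap (Polynomial F) (RatFunc F)) hpoly
    set A := algebraMap (Polynomial F) (RatFunc F)
    have h2 : (A u / A v) ^ 2 + A b * (A u / A v) + A c
        = (A u ^ 2 + A b * A u * A v + A c * A v ^ 2) / A v ^ 2 := by
      field_simp
    rw [h2, hA, zero_div]
  have hob : (polyToLaurentInv F b).order = -(b.natDegree : ℤ) :=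
    order_polyToLaurentInv F hbne
  have hov : (polyToLaurentInv F v).order = -(v.natDegree : ℤ) :=
    order_polyToLaurentInv F hv
  have hLHS : (polyToLaurentInv F b * polyToLaurentInv F v * ω).order
      = -(b.natDegree : ℤ) + -(v.natDegree : ℤ) + ω.order := by
    rw [HahnSeries.order_mul (mul_ne_zero hPb hPv) hωne, HahnSeries.order_mul hPb hPv, hob, hov]
  have hω2 : (ω * ω).order = ω.order + ω.order := HahnSeries.order_mul hωne hωne
  by_cases hd0 : d = 0
  · have hPd0 : polyToLaurentInv F d = 0 := by rw [hd0, polyToLaurentInv_zero]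
    rw [hPd0, add_zero] at hkey
    have heq2 : -(b.natDegree : ℤ) + -(v.natDegree : ℤ) + ω.order = ω.order + ω.order := by
      rw [← hLHS, hkey, hω2]
    have hnat : v.natDegree + b.natDegree ≤ k - 1 := by omega
    rw [hd0, Polynomial.degree_zero, Polynomial.degree_eq_natDegree hv,
      Polynomial.degree_eq_natDegree hbne]
    refine le_trans ?_ (le_max_right _ _)
    exact_mod_cast hnat
  · have hPd : polyToLaurentInv F d ≠ 0 := polyToLaurentInv_ne_zero F hd0
    have hsumne : ω * ω + polyToLaurentInv F d ≠ 0 := by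
      rw [← hkey]
      exact mul_ne_zero (mul_ne_zero hPb hPv) hωne
    have hmin := HahnSeries.min_order_le_order_add hsumne
    rw [← hkey, hLHS, hω2, order_polyToLaurentInv F hd0] at hmin
    have hnat : v.natDegree + b.natDegree ≤ max d.natDegree (k - 1) := by omega
    rw [Polynomial.degree_eq_natDegree hv, Polynomial.degree_eq_natDegree hbne,
      Polynomial.degree_eq_natDegree hd0]
    rcases le_max_iff.mp hnat with h | h
    · refine le_trans ?_ (le_max_left _ _)
      exact_mod_cast h
    · refine le_trans ?_ (le_max_right _ _)
      exact_mod_cast h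
end
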